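/- If G is a graph on n nodes in which every node has even degree, with maximum degree Δ and strict majority thresholds, then every timed target set in the non-progressive threshold model has size at least 4n/(Δ+2). -/
import Mathlib


open Finset
open scoped Classical

variable {V : Type*}

noncomputable def Qseq (G : SimpleGraph V) [Fintype V] (τ : V → ℕ) (S : ℕ → Finset V) :
    ℕ → Finset V
  | 0 => ∅
  | i + 1 => Finset.univ.filter fun v =>
      τ v ≤ (G.neighborFinset v ∩ (S i ∪ Qseq G τ S i)).card

def IsTTS (G : SimpleGraph V) [Fintype V] (τ : V → ℕ) (S : ℕ → Finset V) (k : ℕ) : Prop :=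
  S k = ∅ ∧ Qseq G τ S k = Finset.univ

def ttsSize (S : ℕ → Finset V) (k : ℕ) : ℕ := ∑ i ∈ Finset.range (k + 1), (S i).card

noncomputable def strictMaj (G : SimpleGraph V) [Fintype V] (v : V) : ℕ := (G.degree v + 2) / 2

noncomputable def npStep (G : SimpleGraph V) [Fintype V] (τ : V → ℕ) (A : Finset V) : Finset V :=
  Finset.univ.filter fun v => τ v ≤ (G.neighborFinset v ∩ A).card

def IsTS (G : SimpleGraph V) [Fintype V] (τ : V → ℕ) (S : Finset V) : Prop :=
  ∃ i : ℕ, (npStep G τ)^[i] S = Finset.univ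

noncomputable def MTT (G : SimpleGraph V) [Fintype V] (τ : V → ℕ) : ℕ :=
  sInf {m | ∃ (S : ℕ → Finset V) (k : ℕ), IsTTS G τ S k ∧ ttsSize S k = m}

section Aux

variable [Fintype V]

/-- ±1 indicator of a finset. -/
noncomputable def chiZ (B : Finset V) (v : V) : ℤ := if v ∈ B then 1 else -1

/-- Sum of the ±1 indicator over the neighborhood of `v`. -/
noncomputable def MvZ (G : SimpleGraph V) (B : Finset V) (v : V) : ℤ :=
  ∑ w ∈ G.neighborFinset v, chiZ B w

lemma MvZ_eq (G : SimpleGraph V) (B : Finset V) (v : V) :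
    MvZ G B v = 2 * ((G.neighborFinset v ∩ B).card : ℤ) - (G.degree v : ℤ) := by
  have hsplit : ((G.neighborFinset v).filter (· ∈ B)).card
      + ((G.neighborFinset v).filter (fun w => ¬ w ∈ B)).card = G.degree v := by
    rw [Finset.card_filter_add_card_filter_not]
    rfl
  have hf : (G.neighborFinset v).filter (· ∈ B) = G.neighborFinset v ∩ B :=
    Finset.filter_mem_eq_inter
  have hsum : MvZ G B v = (((G.neighborFinset v).filter (· ∈ B)).card : ℤ)
      - (((G.neighborFinset v).filter (fun w => ¬ w ∈ B)).card : ℤ) := by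
    unfold MvZ chiZ
    rw [Finset.sum_ite]
    simp [sub_eq_add_neg]
  rw [hf] at hsplit
  rw [hsum, hf]
  omega

lemma sum_nbr_swap (G : SimpleGraph V) (f : V → V → ℤ) :
    ∑ v, ∑ w ∈ G.neighborFinset v, f v w = ∑ v, ∑ w ∈ G.neighborFinset v, f w v := by
  have h1 : ∀ (g : V → V → ℤ), (∑ v, ∑ w ∈ G.neighborFinset v, g v w)
      = ∑ v, ∑ w, if G.Adj v w then g v w else 0 := by
    intro g
    refine Finset.sum_congr rfl fun v _ => ?_
    rw [← Finset.sum_filter]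
    refine Finset.sum_congr ?_ fun w _ => rfl
    ext w
    simp [SimpleGraph.mem_neighborFinset]
  rw [h1, h1, Finset.sum_comm]
  refine Finset.sum_congr rfl fun v _ => Finset.sum_congr rfl fun w _ => ?_
  rw [G.adj_comm]

lemma sum_mul_MvZ_comm (G : SimpleGraph V) (P R : Finset V) :
    ∑ v, chiZ P v * MvZ G R v = ∑ v, chiZ R v * MvZ G P v := by
  unfold MvZ
  simp only [Finset.mul_sum]
  rw [sum_nbr_swap G (fun v w => chiZ P v * chiZ R w)]
  refine Finset.sum_congr rfl fun v _ => Finset.sum_congr rfl fun w _ => mul_comm _ _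

/-- The energy of a pair of configurations. -/
noncomputable def gE (G : SimpleGraph V) (P R : Finset V) : ℤ :=
  (∑ v, chiZ P v * (2 - MvZ G R v)) + 2 * ∑ v, chiZ R v

lemma gE_expand (G : SimpleGraph V) (P R : Finset V) :
    gE G P R = 2 * (∑ v, chiZ P v) - (∑ v, chiZ P v * MvZ G R v) + 2 * ∑ v, chiZ R v := by
  unfold gE
  have h : ∀ v : V, chiZ P v * (2 - MvZ G R v) = 2 * chiZ P v - chiZ P v * MvZ G R v :=
    fun v => by ring
  rw [Finset.sum_congr rfl fun v _ => h v, Finset.sum_sub_distrib, ← Finset.mul_sum]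

end Aux

section Aux2

variable [Fintype V]

lemma gE_step (G : SimpleGraph V) (heven : ∀ v, Even (G.degree v))
    (Bold Bmid Bnew Sd : Finset V)
    (hnew : ∀ v, v ∈ Bnew ↔ v ∈ Sd ∨ (G.degree v + 2) / 2 ≤ (G.neighborFinset v ∩ Bmid).card) :
    gE G Bnew Bmid - gE G Bmid Bold ≤ ∑ u ∈ Sd, 2 * ((G.degree u : ℤ) + 2) := by
  have key : gE G Bnew Bmid - gE G Bmid Bold
      = ∑ v, (chiZ Bnew v - chiZ Bold v) * (2 - MvZ G Bmid v) := by
    rw [gE_expand, gE_expand, sum_mul_MvZ_comm G Bmid Bold]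
    have h : ∀ v : V, (chiZ Bnew v - chiZ Bold v) * (2 - MvZ G Bmid v)
        = (2 * chiZ Bnew v - chiZ Bnew v * MvZ G Bmid v)
          - (2 * chiZ Bold v - chiZ Bold v * MvZ G Bmid v) := fun v => by ring
    rw [Finset.sum_congr rfl fun v _ => h v, Finset.sum_sub_distrib,
      Finset.sum_sub_distrib, Finset.sum_sub_distrib, ← Finset.mul_sum, ← Finset.mul_sum]
    ring
  rw [key]
  have hpt : ∀ v ∈ (univ : Finset V), (chiZ Bnew v - chiZ Bold v) * (2 - MvZ G Bmid v)
      ≤ if v ∈ Sd then 2 * ((G.degree v : ℤ) + 2) else 0 := by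
    intro v _
    have hM := MvZ_eq G Bmid v
    have hcard : ((G.neighborFinset v ∩ Bmid).card : ℤ) ≤ (G.degree v : ℤ) := by
      have h1 : (G.neighborFinset v ∩ Bmid).card ≤ (G.neighborFinset v).card :=
        Finset.card_le_card Finset.inter_subset_left
    -- (neighborFinset v).card = degree v
      have h2 : (G.neighborFinset v).card = G.degree v := rfl
      exact_mod_cast h2 ▸ h1
    have hcard0 : (0 : ℤ) ≤ ((G.neighborFinset v ∩ Bmid).card : ℤ) := Int.natCast_nonneg _
    obtain ⟨m, hm⟩ := heven v
    by_cases hs : v ∈ Sd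
    · simp only [hs, if_true]
      have hbn : v ∈ Bnew := (hnew v).2 (Or.inl hs)
      simp only [chiZ, hbn, if_true]
      by_cases ho : v ∈ Bold
      · simp only [ho, if_true]
        have : (0:ℤ) ≤ (G.degree v : ℤ) := Int.natCast_nonneg _
        nlinarith
      · simp only [ho, if_false]
        nlinarith
    · simp only [hs, if_false]
      by_cases hbn : v ∈ Bnew
      · have hτ : (G.degree v + 2) / 2 ≤ (G.neighborFinset v ∩ Bmid).card :=
          ((hnew v).1 hbn).resolve_left hs
        have hM2 : (2:ℤ) ≤ MvZ G Bmid v := by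
          have h3 : m + 1 ≤ (G.neighborFinset v ∩ Bmid).card := by omega
          have h4 : ((m:ℤ) + 1) ≤ ((G.neighborFinset v ∩ Bmid).card : ℤ) := by exact_mod_cast h3
          have hd : (G.degree v : ℤ) = m + m := by exact_mod_cast hm
          rw [hM, hd]; linarith
        simp only [chiZ, hbn, if_true]
        by_cases ho : v ∈ Bold
        · simp [ho]
        · simp only [ho, if_false]; nlinarith
      · have hτ : ¬ (G.degree v + 2) / 2 ≤ (G.neighborFinset v ∩ Bmid).card :=
          fun h => hbn ((hnew v).2 (Or.inr h))
        have hM0 : MvZ G Bmid v ≤ 0 := by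
          have h3 : (G.neighborFinset v ∩ Bmid).card ≤ m := by omega
          have h4 : ((G.neighborFinset v ∩ Bmid).card : ℤ) ≤ (m:ℤ) := by exact_mod_cast h3
          have hd : (G.degree v : ℤ) = m + m := by exact_mod_cast hm
          rw [hM, hd]; linarith
        simp only [chiZ, hbn, if_false]
        by_cases ho : v ∈ Bold
        · simp only [ho, if_true]; nlinarith
        · simp [ho]
  calc ∑ v, (chiZ Bnew v - chiZ Bold v) * (2 - MvZ G Bmid v)
      ≤ ∑ v, (if v ∈ Sd then 2 * ((G.degree v : ℤ) + 2) else 0) := Finset.sum_le_sum hpt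
    _ = ∑ u ∈ Sd, 2 * ((G.degree u : ℤ) + 2) := by
        rw [Finset.sum_ite_mem, Finset.univ_inter]

lemma gE_init (G : SimpleGraph V) (P : Finset V) :
    gE G P ∅ = 2 * (∑ u ∈ P, ((G.degree u : ℤ) + 2)) - (∑ v, ((G.degree v : ℤ) + 2))
      - 2 * (Fintype.card V : ℤ) := by
  have hM : ∀ v : V, MvZ G (∅ : Finset V) v = - (G.degree v : ℤ) := by
    intro v; rw [MvZ_eq]; simp
  have h2 : ∑ v, chiZ (∅ : Finset V) v = -(Fintype.card V : ℤ) := by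
    simp [chiZ, Finset.card_univ]
  unfold gE
  rw [h2]
  have h3 : ∀ v : V, chiZ P v * (2 - MvZ G (∅ : Finset V) v)
      = 2 * (if v ∈ P then ((G.degree v : ℤ) + 2) else 0) - ((G.degree v : ℤ) + 2) := by
    intro v
    rw [hM v]
    unfold chiZ
    by_cases h : v ∈ P <;> simp [h] <;> ring
  rw [Finset.sum_congr rfl fun v _ => h3 v, Finset.sum_sub_distrib, ← Finset.mul_sum,
    Finset.sum_ite_mem, Finset.univ_inter]
  ring

lemma gE_final (G : SimpleGraph V) (R : Finset V) (hd2 : ∀ v, 2 ≤ G.degree v) :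
    6 * (Fintype.card V : ℤ) - (∑ v, ((G.degree v : ℤ) + 2)) ≤ gE G univ R := by
  have hswap : ∑ v, MvZ G R v = ∑ v, chiZ R v * (G.degree v : ℤ) := by
    unfold MvZ
    rw [sum_nbr_swap G (fun v w => chiZ R w)]
    refine Finset.sum_congr rfl fun v _ => ?_
    rw [Finset.sum_const, nsmul_eq_mul, mul_comm]
    rfl
  have h1 : gE G univ R = 2 * (Fintype.card V : ℤ) + ∑ v, chiZ R v * (2 - (G.degree v : ℤ)) := by
    unfold gE
    have hchi : ∀ v : V, chiZ (univ : Finset V) v = 1 := fun v => by simp [chiZ]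
    rw [Finset.sum_congr rfl fun v _ => by rw [hchi v, one_mul]]
    rw [Finset.sum_sub_distrib, hswap]
    have : ∀ v : V, chiZ R v * (2 - (G.degree v : ℤ))
        = 2 * chiZ R v - chiZ R v * (G.degree v : ℤ) := fun v => by ring
    rw [Finset.sum_congr rfl fun v _ => this v, Finset.sum_sub_distrib, ← Finset.mul_sum]
    simp [Finset.card_univ]
    ring
  rw [h1]
  have hpt : ∀ v ∈ (univ : Finset V), (2 : ℤ) - (G.degree v : ℤ)
      ≤ chiZ R v * (2 - (G.degree v : ℤ)) := by
    intro v _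
    have hd : (2 : ℤ) ≤ (G.degree v : ℤ) := by exact_mod_cast hd2 v
    unfold chiZ
    by_cases h : v ∈ R
    · simp [h]
    · simp [h]; linarith
  have hs := Finset.sum_le_sum hpt
  have hc : ∑ v : V, ((2:ℤ) - (G.degree v : ℤ))
      = 4 * (Fintype.card V : ℤ) - ∑ v, ((G.degree v : ℤ) + 2) := by
    rw [Finset.sum_sub_distrib, Finset.sum_add_distrib]
    simp [Finset.card_univ]
    ring
  rw [hc] at hs
  linarith

end Aux2


/-- Theorem 5: If every node of `G` has even degree and `τ` is the strict
majority threshold, then every timed target set has size at least `4n/(Δ+2)`,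
i.e. `4n ≤ size ⬝ (Δ+2)`. -/
theorem stmt7 [Fintype V] (G : SimpleGraph V) (heven : ∀ v, Even (G.degree v))
    (S : ℕ → Finset V) (k : ℕ) (hS : IsTTS G (strictMaj G) S k) :
    4 * Fintype.card V ≤ ttsSize S k * (G.maxDegree + 2) := by
  obtain ⟨hSk, hQk⟩ := hS
  -- the sequence of "effectively active" sets, shifted by one
  set B : ℕ → Finset V := fun t => match t with
    | 0 => ∅
    | (t+1) => S t ∪ Qseq G (strictMaj G) S t with hBdef
  have hBsucc : ∀ t, B (t+1) = S t ∪ Qseq G (strictMaj G) S t := fun t => rfl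
  have hQ0 : Qseq G (strictMaj G) S 0 = ∅ := rfl
  -- the uniform recurrence
  have hnew : ∀ t v, v ∈ B (t+1) ↔ v ∈ S t ∨
      (G.degree v + 2) / 2 ≤ (G.neighborFinset v ∩ B t).card := by
    intro t v
    cases t with
    | zero =>
      have h0 : (G.neighborFinset v ∩ B 0).card = 0 := by
        show (G.neighborFinset v ∩ ∅).card = 0
        simp
      rw [hBsucc, hQ0, h0]
      have hτ : ¬ (G.degree v + 2) / 2 ≤ 0 := by omega
      simp [hτ]
    | succ s =>
      rw [hBsucc]
      show v ∈ S (s+1) ∪ Qseq G (strictMaj G) S (s+1) ↔ _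
      rw [Finset.mem_union]
      constructor
      · rintro (h | h)
        · exact Or.inl h
        · right
          have := (Finset.mem_filter.1 h).2
          exact this
      · rintro (h | h)
        · exact Or.inl h
        · right
          exact Finset.mem_filter.2 ⟨Finset.mem_univ v, h⟩
  -- every degree is at least 2
  have hd2 : ∀ v, 2 ≤ G.degree v := by
    intro v
    cases k with
    | zero =>
      exfalso
      have : v ∈ Qseq G (strictMaj G) S 0 := hQk ▸ Finset.mem_univ v
      rw [hQ0] at this
      exact absurd this (Finset.notMem_empty v)
    | succ j =>
      have hv : v ∈ Qseq G (strictMaj G) S (j+1) := hQk ▸ Finset.mem_univ v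
      have hτ : strictMaj G v ≤
          (G.neighborFinset v ∩ (S j ∪ Qseq G (strictMaj G) S j)).card :=
        (Finset.mem_filter.1 hv).2
      have hcard : (G.neighborFinset v ∩ (S j ∪ Qseq G (strictMaj G) S j)).card
          ≤ G.degree v :=
        Finset.card_le_card
          (Finset.inter_subset_left
            (s₂ := S j ∪ Qseq G (strictMaj G) S j))
      obtain ⟨m, hm⟩ := heven v
      have htau : strictMaj G v = m + 1 := by unfold strictMaj; omega
      rw [htau] at hτ
      omega
  have hBlast : B (k+1) = univ := by
    rw [hBsucc, hSk, hQk]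
    simp
  have hB1 : B 1 = S 0 := by
    rw [hBsucc, hQ0, Finset.union_empty]
  -- telescoping the energy
  have tele : gE G (B (k+1)) (B k) - gE G (B 1) (B 0)
      = ∑ t ∈ Finset.range k, (gE G (B (t+2)) (B (t+1)) - gE G (B (t+1)) (B t)) :=
    (Finset.sum_range_sub (fun t => gE G (B (t+1)) (B t)) k).symm
  have hstep : ∀ t, gE G (B (t+2)) (B (t+1)) - gE G (B (t+1)) (B t)
      ≤ ∑ u ∈ S (t+1), 2 * ((G.degree u : ℤ) + 2) :=
    fun t => gE_step G heven (B t) (B (t+1)) (B (t+2)) (S (t+1)) (hnew (t+1))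
  have hsumstep : gE G (B (k+1)) (B k) - gE G (B 1) (B 0)
      ≤ ∑ t ∈ Finset.range k, ∑ u ∈ S (t+1), 2 * ((G.degree u : ℤ) + 2) := by
    rw [tele]
    exact Finset.sum_le_sum fun t _ => hstep t
  have hinit : gE G (B 1) (B 0) = 2 * (∑ u ∈ S 0, ((G.degree u : ℤ) + 2))
      - (∑ v, ((G.degree v : ℤ) + 2)) - 2 * (Fintype.card V : ℤ) := by
    rw [hB1]
    show gE G (S 0) ∅ = _
    exact gE_init G (S 0)
  have hfin : 6 * (Fintype.card V : ℤ) - (∑ v, ((G.degree v : ℤ) + 2))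
      ≤ gE G (B (k+1)) (B k) := by
    rw [hBlast]
    exact gE_final G (B k) hd2
  -- main inequality with degrees
  have main : 8 * (Fintype.card V : ℤ)
      ≤ ∑ t ∈ Finset.range (k+1), ∑ u ∈ S t, 2 * ((G.degree u : ℤ) + 2) := by
    rw [Finset.sum_range_succ' (fun t => ∑ u ∈ S t, 2 * ((G.degree u : ℤ) + 2)) k]
    have e0 : ∑ u ∈ S 0, 2 * ((G.degree u : ℤ) + 2)
        = 2 * ∑ u ∈ S 0, ((G.degree u : ℤ) + 2) := by
      rw [Finset.mul_sum]
    linarith [hsumstep, hinit ▸ hsumstep]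
  -- replace degrees by the max degree
  have hmax : ∀ t, (∑ u ∈ S t, 2 * ((G.degree u : ℤ) + 2))
      ≤ ((S t).card : ℤ) * (2 * ((G.maxDegree : ℤ) + 2)) := by
    intro t
    calc ∑ u ∈ S t, 2 * ((G.degree u : ℤ) + 2)
        ≤ ∑ u ∈ S t, 2 * ((G.maxDegree : ℤ) + 2) := by
          refine Finset.sum_le_sum fun u _ => ?_
          have := G.degree_le_maxDegree u
          have h2 : (G.degree u : ℤ) ≤ (G.maxDegree : ℤ) := by exact_mod_cast this
          linarith
      _ = ((S t).card : ℤ) * (2 * ((G.maxDegree : ℤ) + 2)) := by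
          rw [Finset.sum_const, nsmul_eq_mul]
  have final : 8 * (Fintype.card V : ℤ)
      ≤ (ttsSize S k : ℤ) * (2 * ((G.maxDegree : ℤ) + 2)) := by
    have h1 : ∑ t ∈ Finset.range (k+1), ∑ u ∈ S t, 2 * ((G.degree u : ℤ) + 2)
        ≤ ∑ t ∈ Finset.range (k+1), ((S t).card : ℤ) * (2 * ((G.maxDegree : ℤ) + 2)) :=
      Finset.sum_le_sum fun t _ => hmax t
    have h2 : ∑ t ∈ Finset.range (k+1), ((S t).card : ℤ) * (2 * ((G.maxDegree : ℤ) + 2))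
        = (ttsSize S k : ℤ) * (2 * ((G.maxDegree : ℤ) + 2)) := by
      rw [← Finset.sum_mul]
      congr 1
      unfold ttsSize
      push_cast
      rfl
    linarith [main]
  have hZ : (4 * Fintype.card V : ℤ) ≤ ((ttsSize S k * (G.maxDegree + 2) : ℕ) : ℤ) := by
    push_cast
    linarith
  exact_mod_cast hZ
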